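/- Let x₁,…,x_N and y₁,…,y_N be real numbers and a ∈ ℝ. Suppose there exist indices i, j with x_i + y_j ≥ a, and define î = argmin{x_i : ∃ j, x_i + y_j ≥ a} and ĵ = argmin{y_j : x_î + y_j ≥ a}. Then there exists a permutation σ of {1,…,N} maximizing #{i : x_i + y_{σ(i)} ≥ a} such that σ(î) = ĵ. -/

import Mathlib

open scoped Classical

/-- If some pair sums to at least `a`, and `î`, `ĵ` are the greedy minimizers
(`î` minimizes `x` among matchable indices, `ĵ` minimizes `y` among partners of `î`),
then there exists an optimal matching `σ` with `σ î = ĵ`. -/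
theorem stmt5 {N : ℕ} (x y : Fin N → ℝ) (a : ℝ) (ih jh : Fin N)
    (h1 : ∃ j, a ≤ x ih + y j)
    (h2 : ∀ i, (∃ j, a ≤ x i + y j) → x ih ≤ x i)
    (h3 : a ≤ x ih + y jh)
    (h4 : ∀ j, a ≤ x ih + y j → y jh ≤ y j) :
    ∃ σ : Equiv.Perm (Fin N),
      (∀ τ : Equiv.Perm (Fin N),
        (Finset.univ.filter (fun i => a ≤ x i + y (τ i))).card ≤
          (Finset.univ.filter (fun i => a ≤ x i + y (σ i))).card) ∧
      σ ih = jh := by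
  set score : Equiv.Perm (Fin N) → ℕ :=
    fun f => (Finset.univ.filter (fun i => a ≤ x i + y (f i))).card with hscore
  obtain ⟨τ, -, hτ⟩ := Finset.exists_max_image (Finset.univ : Finset (Equiv.Perm (Fin N)))
    score ⟨1, Finset.mem_univ 1⟩
  set σ : Equiv.Perm (Fin N) := τ.trans (Equiv.swap (τ ih) jh) with hσ
  have hσih : σ ih = jh := by simp [hσ, Equiv.swap_apply_left]
  refine ⟨σ, fun ρ => le_trans (hτ ρ (Finset.mem_univ ρ)) ?_, hσih⟩
  -- it suffices: score τ ≤ score σ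
  show score τ ≤ score σ
  set i' : Fin N := τ.symm jh with hi'
  have hτi' : τ i' = jh := Equiv.apply_symm_apply τ jh
  have hσi' : σ i' = τ ih := by
    simp [hσ, hτi', Equiv.swap_apply_right]
  have hfix : ∀ i, i ∉ ({ih, i'} : Finset (Fin N)) → σ i = τ i := by
    intro i hi
    simp only [Finset.mem_insert, Finset.mem_singleton, not_or] at hi
    have h1' : τ i ≠ τ ih := fun h => hi.1 (τ.injective h)
    have h2' : τ i ≠ jh := fun h => hi.2 (by rw [hi', ← h, Equiv.symm_apply_apply])
    simp [hσ, Equiv.swap_apply_of_ne_of_ne h1' h2']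
  set g : (Fin N → Fin N) → Fin N → ℕ := fun f i => if a ≤ x i + y (f i) then 1 else 0 with hg
  have hcard : ∀ f : Equiv.Perm (Fin N), score f = ∑ i, g f i := by
    intro f
    simp only [hscore, hg]
    rw [Finset.card_filter]
  rw [hcard, hcard]
  rw [← Finset.sum_add_sum_compl ({ih, i'} : Finset (Fin N)) (g τ),
      ← Finset.sum_add_sum_compl ({ih, i'} : Finset (Fin N)) (g σ)]
  have hcompl : ∑ i ∈ ({ih, i'} : Finset (Fin N))ᶜ, g τ i
      = ∑ i ∈ ({ih, i'} : Finset (Fin N))ᶜ, g σ i := by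
    apply Finset.sum_congr rfl
    intro i hi
    rw [Finset.mem_compl] at hi
    simp [hg, hfix i hi]
  rw [hcompl]
  apply add_le_add_left
  have hgσih : g σ ih = 1 := by simp [hg, hσih, h3]
  have e1 : g τ ih ≤ 1 := by simp only [hg]; split <;> omega
  have e2 : g τ i' ≤ 1 := by simp only [hg]; split <;> omega
  by_cases hii : ih = i'
  · rw [show ({ih, i'} : Finset (Fin N)) = {ih} from by simp [← hii],
      Finset.sum_singleton, Finset.sum_singleton, hgσih]
    exact e1
  · rw [Finset.sum_pair hii, Finset.sum_pair hii, hgσih]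
    by_cases hA : a ≤ x ih + y (τ ih)
    · by_cases hB : a ≤ x i' + y (τ i')
      · have hB' : a ≤ x i' + y jh := by rwa [hτi'] at hB
        have hx : x ih ≤ x i' := h2 i' ⟨jh, hB'⟩
        have hy : y jh ≤ y (τ ih) := h4 (τ ih) hA
        have hnew : a ≤ x i' + y (σ i') := by rw [hσi']; linarith
        have : g σ i' = 1 := by simp only [hg, if_pos hnew]
        omega
      · have : g τ i' = 0 := by simp only [hg, if_neg hB]
        omega
    · have : g τ ih = 0 := by simp only [hg, if_neg hA]
      omega
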